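/- Let K be algebraically closed, I = (f_1, …, f_r) ⊴ K[x], and suppose the identity matrix 1_n lies in V(I). Suppose for each 1 ≤ i ≤ r that g_i ∈ K[x, y] and l_i ∈ ℕ satisfy det(w)^{l_i} · f_i(v·w⁻¹) = g_i(v, w) for all v ∈ K^{n×n} and all w ∈ GL(n, K) (this expresses g_i as f_i evaluated at x·N(y), cleared of denominators). Then V*(I) is a group under matrix multiplication if and only if g_i ∈ √(Î_xy) for every 1 ≤ i ≤ r, where g_i is regarded as an element of K[x̂, ŷ]. -/

import Mathlib

open MvPolynomial

/-- Evaluation of a polynomial in the `n²` indeterminates at an `n × n` matrix. -/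
noncomputable def matEval {n : ℕ} {K : Type*} [Field K] (v : Matrix (Fin n) (Fin n) K) :
    MvPolynomial (Fin n × Fin n) K →+* K :=
  MvPolynomial.eval (fun p => v p.1 p.2)

/-- `V(I)`: the matrices annihilating every polynomial of `I`. -/
def Vset {n : ℕ} {K : Type*} [Field K] (I : Ideal (MvPolynomial (Fin n × Fin n) K)) :
    Set (Matrix (Fin n) (Fin n) K) :=
  {v | ∀ f ∈ I, matEval v f = 0}

/-- `V*(I) = V(I) ∩ GL(n,K)`: the invertible matrices in `V(I)`. -/
def Vstar {n : ℕ} {K : Type*} [Field K] (I : Ideal (MvPolynomial (Fin n × Fin n) K)) :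
    Set (Matrix (Fin n) (Fin n) K) :=
  {v | v ∈ Vset I ∧ IsUnit v}

/-- `det(x)`, the determinant of the matrix of indeterminates. -/
noncomputable def detPoly (n : ℕ) (K : Type*) [Field K] : MvPolynomial (Fin n × Fin n) K :=
  (Matrix.of fun i j => MvPolynomial.X (i, j)).det

/-- `f₀ = x₀ · det(x) − 1 ∈ K[x̂]`, where `x₀` is the extra indeterminate `none`. -/
noncomputable def fzero (n : ℕ) (K : Type*) [Field K] :
    MvPolynomial (Option (Fin n × Fin n)) K :=
  MvPolynomial.X none * MvPolynomial.rename some (detPoly n K) - 1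

/-- `Î = I·K[x̂] + (f₀)`. -/
noncomputable def Ihat {n : ℕ} {K : Type*} [Field K]
    (I : Ideal (MvPolynomial (Fin n × Fin n) K)) :
    Ideal (MvPolynomial (Option (Fin n × Fin n)) K) :=
  Ideal.map (MvPolynomial.rename (some : Fin n × Fin n → Option (Fin n × Fin n))) I
    ⊔ Ideal.span {fzero n K}

/-- Evaluation of a polynomial in `K[x̂]` at a pair `(v₀, v) ∈ K ⊕ K^{n×n}`. -/
noncomputable def hatEval {n : ℕ} {K : Type*} [Field K] (v₀ : K)
    (v : Matrix (Fin n) (Fin n) K) :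
    MvPolynomial (Option (Fin n × Fin n)) K →+* K :=
  MvPolynomial.eval (fun o : Option (Fin n × Fin n) => o.elim v₀ (fun p => v p.1 p.2))

/-- `V(Ĵ) ⊆ K ⊕ K^{n×n}` for an ideal `Ĵ ⊴ K[x̂]`. -/
def VhatSet {n : ℕ} {K : Type*} [Field K]
    (J : Ideal (MvPolynomial (Option (Fin n × Fin n)) K)) :
    Set (K × Matrix (Fin n) (Fin n) K) :=
  {p | ∀ f ∈ J, hatEval p.1 p.2 f = 0}

/-- `Î_xy = Î·K[x̂,ŷ] + φ(Î)·K[x̂,ŷ] ⊴ K[x̂,ŷ]`, where the left summand of the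
variable type is `x̂` and the right one is `ŷ`. -/
noncomputable def Ihatxy {n : ℕ} {K : Type*} [Field K]
    (I : Ideal (MvPolynomial (Fin n × Fin n) K)) :
    Ideal (MvPolynomial (Option (Fin n × Fin n) ⊕ Option (Fin n × Fin n)) K) :=
  Ideal.map (MvPolynomial.rename
      (Sum.inl : Option (Fin n × Fin n) → Option (Fin n × Fin n) ⊕ Option (Fin n × Fin n)))
      (Ihat I)
    ⊔ Ideal.map (MvPolynomial.rename
      (Sum.inr : Option (Fin n × Fin n) → Option (Fin n × Fin n) ⊕ Option (Fin n × Fin n)))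
      (Ihat I)


/-- Evaluation of a polynomial in `K[x,y]` at a pair of matrices `(v, w)`. -/
noncomputable def matEval2 {n : ℕ} {K : Type*} [Field K]
    (v w : Matrix (Fin n) (Fin n) K) :
    MvPolynomial ((Fin n × Fin n) ⊕ (Fin n × Fin n)) K →+* K :=
  MvPolynomial.eval (Sum.elim (fun p => v p.1 p.2) (fun p => w p.1 p.2))


section AuxStmt13

variable {n : ℕ} {K : Type*} [Field K]

lemma matEval_detPoly (v : Matrix (Fin n) (Fin n) K) :
    matEval v (detPoly n K) = v.det := by
  unfold matEval detPoly
  rw [RingHom.map_det]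
  congr 1
  ext i j
  simp

lemma eval_fzero (x : Option (Fin n × Fin n) → K) :
    MvPolynomial.eval x (fzero n K)
      = x none * (Matrix.of fun i j => x (some (i, j))).det - 1 := by
  have h : MvPolynomial.eval x (rename some (detPoly n K))
      = (Matrix.of fun i j => x (some (i, j))).det := by
    rw [eval_rename]
    exact matEval_detPoly (Matrix.of fun i j => x (some (i, j)))
  simp [fzero, h]

lemma comap_rename_ker {σ τ : Type*} (φ : σ → τ) (x : τ → K) :
    Ideal.comap (rename φ : MvPolynomial σ K →ₐ[K] MvPolynomial τ K)
        (RingHom.ker (MvPolynomial.eval x))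
      = RingHom.ker (MvPolynomial.eval (x ∘ φ)) := by
  ext q
  simp [Ideal.mem_comap, RingHom.mem_ker, eval_rename]

lemma Ihat_le_ker_iff (I : Ideal (MvPolynomial (Fin n × Fin n) K))
    (x : Option (Fin n × Fin n) → K) :
    Ihat I ≤ RingHom.ker (MvPolynomial.eval x) ↔
      (Matrix.of fun i j => x (some (i, j))) ∈ Vset I ∧
        x none * (Matrix.of fun i j => x (some (i, j))).det = 1 := by
  set M : Matrix (Fin n) (Fin n) K := Matrix.of fun i j => x (some (i, j)) with hM
  have hcomp : MvPolynomial.eval (x ∘ some) = matEval M := rfl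
  constructor
  · intro h
    refine ⟨fun q hq => ?_, ?_⟩
    · have h1 : rename some q ∈ Ihat I := Ideal.mem_sup_left (Ideal.mem_map_of_mem _ hq)
      have h2 := h h1
      rw [RingHom.mem_ker, eval_rename, hcomp] at h2
      exact h2
    · have h1 : fzero n K ∈ Ihat I := Ideal.mem_sup_right (Ideal.mem_span_singleton_self _)
      have h2 := h h1
      rw [RingHom.mem_ker, eval_fzero] at h2
      exact sub_eq_zero.mp h2
  · rintro ⟨hv, hdet⟩
    rw [Ihat]
    apply sup_le
    · rw [Ideal.map_le_iff_le_comap]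
      intro q hq
      rw [Ideal.mem_comap, RingHom.mem_ker, eval_rename, hcomp]
      exact hv q hq
    · rw [Ideal.span_le, Set.singleton_subset_iff]
      show fzero n K ∈ RingHom.ker (MvPolynomial.eval x)
      rw [RingHom.mem_ker, eval_fzero, hdet, sub_self]

lemma mem_zeroLocus_Ihatxy (I : Ideal (MvPolynomial (Fin n × Fin n) K))
    (p : Option (Fin n × Fin n) ⊕ Option (Fin n × Fin n) → K) :
    p ∈ MvPolynomial.zeroLocus K (Ihatxy I) ↔
      Ihat I ≤ RingHom.ker (MvPolynomial.eval (p ∘ Sum.inl)) ∧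
        Ihat I ≤ RingHom.ker (MvPolynomial.eval (p ∘ Sum.inr)) := by
  have h0 : p ∈ MvPolynomial.zeroLocus K (Ihatxy I) ↔
      Ihatxy I ≤ RingHom.ker (MvPolynomial.eval p) := by
    rw [MvPolynomial.mem_zeroLocus_iff]
    exact ⟨fun h q hq => h q hq, fun h q hq => h hq⟩
  rw [h0, Ihatxy, sup_le_iff, Ideal.map_le_iff_le_comap, Ideal.map_le_iff_le_comap,
    comap_rename_ker, comap_rename_ker]

end AuxStmt13

/-- Suppose `1ₙ ∈ V(I)` and for each `i`, `gᵢ ∈ K[x,y]` satisfies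
`det(w)^{lᵢ} · fᵢ(v·w⁻¹) = gᵢ(v, w)` for all `v` and all invertible `w`
(i.e. `gᵢ` is `fᵢ` evaluated at `x·N(y)`, cleared of denominators). Then `V*(I)` is
a subgroup of `GL(n,K)` iff `gᵢ ∈ √(Î_xy)` for every `i`, where `gᵢ` is regarded
as an element of `K[x̂,ŷ]`. -/
theorem stmt13 {n : ℕ} (hn : 1 ≤ n) {K : Type*} [Field K] [IsAlgClosed K]
    (r : ℕ) (f : Fin r → MvPolynomial (Fin n × Fin n) K)
    (g : Fin r → MvPolynomial ((Fin n × Fin n) ⊕ (Fin n × Fin n)) K) (l : Fin r → ℕ)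
    (I : Ideal (MvPolynomial (Fin n × Fin n) K)) (hI : I = Ideal.span (Set.range f))
    (hone : (1 : Matrix (Fin n) (Fin n) K) ∈ Vset I)
    (hfg : ∀ i : Fin r, ∀ v w : Matrix (Fin n) (Fin n) K, IsUnit w →
      w.det ^ l i * matEval (v * w⁻¹) (f i) = matEval2 v w (g i)) :
    (∃ G : Subgroup (GL (Fin n) K),
        (fun x : GL (Fin n) K => (x : Matrix (Fin n) (Fin n) K)) '' ↑G = Vstar I) ↔
      (∀ i : Fin r,
        MvPolynomial.rename (Sum.map (some : Fin n × Fin n → Option (Fin n × Fin n)) some)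
          (g i) ∈ (Ihatxy I).radical) := by
  classical
  have hdetne : ∀ w : Matrix (Fin n) (Fin n) K, IsUnit w → w.det ≠ 0 := fun w hw =>
    IsUnit.ne_zero ((Matrix.isUnit_iff_isUnit_det w).mp hw)
  constructor
  · -- group ⇒ radical membership
    rintro ⟨G, hG⟩ i
    rw [← MvPolynomial.vanishingIdeal_zeroLocus_eq_radical (K := K),
      MvPolynomial.mem_vanishingIdeal_iff]
    intro p hp
    rw [MvPolynomial.aeval_eq_eval]
    rw [mem_zeroLocus_Ihatxy] at hp
    obtain ⟨hv, hvdet⟩ := (Ihat_le_ker_iff I (p ∘ Sum.inl)).mp hp.1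
    obtain ⟨hw, hwdet⟩ := (Ihat_le_ker_iff I (p ∘ Sum.inr)).mp hp.2
    set v : Matrix (Fin n) (Fin n) K :=
      Matrix.of fun i j => (p ∘ Sum.inl) (some (i, j)) with hvdef
    set w : Matrix (Fin n) (Fin n) K :=
      Matrix.of fun i j => (p ∘ Sum.inr) (some (i, j)) with hwdef
    have hvu : IsUnit v := (Matrix.isUnit_iff_isUnit_det v).mpr
      (IsUnit.of_mul_eq_one _ ((mul_comm _ _).trans hvdet))
    have hwu : IsUnit w := (Matrix.isUnit_iff_isUnit_det w).mpr
      (IsUnit.of_mul_eq_one _ ((mul_comm _ _).trans hwdet))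
    have hvV : v ∈ Vstar I := ⟨hv, hvu⟩
    have hwV : w ∈ Vstar I := ⟨hw, hwu⟩
    rw [← hG] at hvV hwV
    obtain ⟨a, haG, hav⟩ := hvV
    obtain ⟨b, hbG, hbw⟩ := hwV
    have hav' : (↑a : Matrix (Fin n) (Fin n) K) = v := hav
    have hbw' : (↑b : Matrix (Fin n) (Fin n) K) = w := hbw
    have hmem : ((a * b⁻¹ : GL (Fin n) K) : Matrix (Fin n) (Fin n) K) ∈ Vstar I := by
      rw [← hG]
      exact ⟨a * b⁻¹, mul_mem haG (inv_mem hbG), rfl⟩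
    have hcoe : ((a * b⁻¹ : GL (Fin n) K) : Matrix (Fin n) (Fin n) K) = v * w⁻¹ := by
      rw [Units.val_mul, Matrix.coe_units_inv, hav', hbw']
    rw [hcoe] at hmem
    have hfi : matEval (v * w⁻¹) (f i) = 0 := by
      apply hmem.1
      rw [hI]
      exact Ideal.subset_span (Set.mem_range_self i)
    have hz := hfg i v w hwu
    rw [hfi, mul_zero] at hz
    have hfun : p ∘ Sum.map (some : Fin n × Fin n → Option (Fin n × Fin n)) some
        = Sum.elim (fun q : Fin n × Fin n => v q.1 q.2)
            (fun q : Fin n × Fin n => w q.1 q.2) := by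
      funext s
      cases s with
      | inl q => rfl
      | inr q => rfl
    have hev : MvPolynomial.eval p
        (rename (Sum.map (some : Fin n × Fin n → Option (Fin n × Fin n)) some) (g i))
        = matEval2 v w (g i) := by
      rw [eval_rename, hfun]
      rfl
    rw [hev, ← hz]
  · -- radical membership ⇒ group
    intro hrad
    have hclos : ∀ v w : Matrix (Fin n) (Fin n) K, v ∈ Vset I → IsUnit v →
        w ∈ Vset I → IsUnit w → v * w⁻¹ ∈ Vset I := by
      intro v w hv hvu hw hwu
      set p : Option (Fin n × Fin n) ⊕ Option (Fin n × Fin n) → K :=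
        Sum.elim (fun o => o.elim (v.det)⁻¹ fun q => v q.1 q.2)
          (fun o => o.elim (w.det)⁻¹ fun q => w q.1 q.2) with hpdef
      have hfis : ∀ i : Fin r, matEval (v * w⁻¹) (f i) = 0 := by
        intro i
        have hpz : p ∈ MvPolynomial.zeroLocus K (Ihatxy I) := by
          rw [mem_zeroLocus_Ihatxy]
          constructor
          · exact (Ihat_le_ker_iff I (p ∘ Sum.inl)).mpr
              ⟨hv, inv_mul_cancel₀ (hdetne v hvu)⟩
          · exact (Ihat_le_ker_iff I (p ∘ Sum.inr)).mpr
              ⟨hw, inv_mul_cancel₀ (hdetne w hwu)⟩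
        have hvan : rename (Sum.map (some : Fin n × Fin n → Option (Fin n × Fin n)) some)
            (g i) ∈ MvPolynomial.vanishingIdeal K (MvPolynomial.zeroLocus K (Ihatxy I)) := by
          rw [MvPolynomial.vanishingIdeal_zeroLocus_eq_radical]
          exact hrad i
        have h0 := (MvPolynomial.mem_vanishingIdeal_iff).mp hvan p hpz
        have hfun : p ∘ Sum.map (some : Fin n × Fin n → Option (Fin n × Fin n)) some
            = Sum.elim (fun q : Fin n × Fin n => v q.1 q.2)
                (fun q : Fin n × Fin n => w q.1 q.2) := by
          funext s
          cases s with
          | inl q => rfl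
          | inr q => rfl
        rw [MvPolynomial.aeval_eq_eval, eval_rename, hfun] at h0
        have h0' : matEval2 v w (g i) = 0 := h0
        have h1 := hfg i v w hwu
        rw [h0'] at h1
        rcases mul_eq_zero.mp h1 with h | h
        · exact absurd h (pow_ne_zero _ (hdetne w hwu))
        · exact h
      intro q hq
      rw [hI] at hq
      have hle : Ideal.span (Set.range f) ≤ RingHom.ker (matEval (v * w⁻¹)) := by
        rw [Ideal.span_le]
        rintro _ ⟨i, rfl⟩
        exact hfis i
      exact hle hq
    have hinv : ∀ u : GL (Fin n) K, (↑u : Matrix (Fin n) (Fin n) K) ∈ Vset I →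
        ((↑(u⁻¹) : Matrix (Fin n) (Fin n) K)) ∈ Vset I := by
      intro u hu
      rw [Matrix.coe_units_inv]
      have h2 := hclos 1 ↑u hone isUnit_one hu u.isUnit
      rwa [one_mul] at h2
    refine ⟨{ carrier := {u : GL (Fin n) K | (↑u : Matrix (Fin n) (Fin n) K) ∈ Vset I}
              one_mem' := by simpa using hone
              mul_mem' := by
                intro a b ha hb
                have h1 := hinv b hb
                have h2 := hclos (↑a) (↑(b⁻¹)) ha a.isUnit h1 (b⁻¹).isUnit
                rw [Matrix.coe_units_inv, Matrix.nonsing_inv_nonsing_inv _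
                  ((Matrix.isUnit_iff_isUnit_det _).mp b.isUnit)] at h2
                simpa using h2
              inv_mem' := fun h => hinv _ h }, ?_⟩
    ext v
    constructor
    · rintro ⟨u, hu, rfl⟩
      exact ⟨hu, u.isUnit⟩
    · rintro ⟨hv, hu⟩
      refine ⟨hu.unit, ?_, hu.unit_spec⟩
      show ((hu.unit : GL (Fin n) K) : Matrix (Fin n) (Fin n) K) ∈ Vset I
      rw [hu.unit_spec]
      exact hv
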